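/- A symmetric tensor of even order m is a P tensor if and only if it is positive definite, i.e., A x^m > 0 for all nonzero x in R^n. -/

import Mathlib

open Finset

noncomputable section

/-- The contraction `(A x^{m})_i` of an order-`m+1` tensor with `m` copies of `x`. -/
def contrT {m n : ℕ} (A : (Fin (m+1) → Fin n) → ℝ) (x : Fin n → ℝ) (i : Fin n) : ℝ :=
  ∑ f : Fin m → Fin n, A (Fin.cons i f) * ∏ k, x (f k)

/-- `A x^M` for an order-`M` tensor. -/
def polyT {M n : ℕ} (A : (Fin M → Fin n) → ℝ) (x : Fin n → ℝ) : ℝ :=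
  ∑ f : Fin M → Fin n, A f * ∏ k, x (f k)

/-- P tensor: for every nonzero `x`, `max_i x_i (A x^{m-1})_i > 0`. -/
def IsPTensor {m n : ℕ} (A : (Fin (m+1) → Fin n) → ℝ) : Prop :=
  ∀ x : Fin n → ℝ, x ≠ 0 → ∃ i : Fin n, 0 < x i * contrT A x i

/-- P₀ tensor: for every nonzero `x` there is `i` with `x i ≠ 0` and `x_i (A x^{m-1})_i ≥ 0`. -/
def IsP0Tensor {m n : ℕ} (A : (Fin (m+1) → Fin n) → ℝ) : Prop :=
  ∀ x : Fin n → ℝ, x ≠ 0 → ∃ i : Fin n, x i ≠ 0 ∧ 0 ≤ x i * contrT A x i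

def infNorm {n : ℕ} (x : Fin n → ℝ) : ℝ := ⨆ i, |x i|

/-- The operator `T_A(x) = ‖x‖₂^{2-m} A x^{m-1}` (order of the tensor is `m+1`). -/
def TA {m n : ℕ} (A : (Fin (m+1) → Fin n) → ℝ) (x : Fin n → ℝ) (i : Fin n) : ℝ :=
  if x = 0 then 0
  else (Real.sqrt (∑ j, x j ^ 2)) ^ ((2 : ℤ) - ((m : ℤ) + 1)) * contrT A x i

/-- `α(T_A) = min_{‖x‖_∞ = 1} max_i x_i (T_A(x))_i`. -/
def alphaT {m n : ℕ} (A : (Fin (m+1) → Fin n) → ℝ) : ℝ :=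
  sInf ((fun x => ⨆ i, x i * TA A x i) '' {x : Fin n → ℝ | infNorm x = 1})

/-- B tensor of order `m+1`. -/
def IsBTensor {m n : ℕ} (B : (Fin (m+1) → Fin n) → ℝ) : Prop :=
  ∀ i : Fin n, (0 < ∑ f : Fin m → Fin n, B (Fin.cons i f)) ∧
    ∀ g : Fin m → Fin n, g ≠ (fun _ => i) →
      B (Fin.cons i g) < (1 / (n : ℝ) ^ m) * ∑ f : Fin m → Fin n, B (Fin.cons i f)

/-- B₀ tensor of order `m+1`. -/
def IsB0Tensor {m n : ℕ} (B : (Fin (m+1) → Fin n) → ℝ) : Prop :=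
  ∀ i : Fin n, (0 ≤ ∑ f : Fin m → Fin n, B (Fin.cons i f)) ∧
    ∀ g : Fin m → Fin n, g ≠ (fun _ => i) →
      B (Fin.cons i g) ≤ (1 / (n : ℝ) ^ m) * ∑ f : Fin m → Fin n, B (Fin.cons i f)

section aux
variable {m n : ℕ}

lemma prod_erase_zero (h : Fin (m+1) → ℝ) :
    ∏ l ∈ univ.erase (0 : Fin (m+1)), h l = ∏ k : Fin m, h k.succ := by
  rw [show (univ.erase (0 : Fin (m+1))) = Finset.image Fin.succ univ from ?_]
  · rw [Finset.prod_image fun a _ b _ hab => Fin.succ_injective _ hab]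
  · ext a
    simp [Fin.exists_succ_eq]

lemma sum_cons_decomp (H : (Fin (m+1) → Fin n) → ℝ) :
    ∑ f : Fin (m+1) → Fin n, H f = ∑ i : Fin n, ∑ g : Fin m → Fin n, H (Fin.cons i g) := by
  rw [← Fintype.sum_equiv (Fin.consEquiv fun _ => Fin n)
    (fun p => H (Fin.cons p.1 p.2)) H fun p => rfl]
  exact Fintype.sum_prod_type _

lemma polyT_eq_sum (A : (Fin (m+1) → Fin n) → ℝ) (x : Fin n → ℝ) :
    polyT A x = ∑ i, x i * contrT A x i := by
  rw [polyT, sum_cons_decomp]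
  refine Finset.sum_congr rfl fun i _ => ?_
  rw [contrT, Finset.mul_sum]
  refine Finset.sum_congr rfl fun g _ => ?_
  rw [Fin.prod_univ_succ]
  simp only [Fin.cons_zero, Fin.cons_succ]
  ring

lemma polyT_smul {M : ℕ} (A : (Fin M → Fin n) → ℝ) (c : ℝ) (x : Fin n → ℝ) :
    polyT A (c • x) = c ^ M * polyT A x := by
  rw [polyT, polyT, Finset.mul_sum]
  refine Finset.sum_congr rfl fun f _ => ?_
  simp only [Pi.smul_apply, smul_eq_mul, Finset.prod_mul_distrib, Finset.prod_const,
    Finset.card_univ, Fintype.card_fin]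
  ring

lemma sum_deriv_term (A : (Fin (m+1) → Fin n) → ℝ)
    (hsym : ∀ (σ : Equiv.Perm (Fin (m+1))) (f : Fin (m+1) → Fin n), A (f ∘ σ) = A f)
    (x v : Fin n → ℝ) (k : Fin (m+1)) :
    ∑ f : Fin (m+1) → Fin n, A f * ((∏ l ∈ univ.erase k, x (f l)) * v (f k))
      = ∑ i, v i * contrT A x i := by
  set σ : Equiv.Perm (Fin (m+1)) := Equiv.swap 0 k with hσ
  have h1 : ∑ f : Fin (m+1) → Fin n, A f * ((∏ l ∈ univ.erase k, x (f l)) * v (f k))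
      = ∑ f : Fin (m+1) → Fin n, A f * ((∏ l ∈ univ.erase 0, x (f l)) * v (f 0)) := by
    refine Fintype.sum_equiv (Equiv.arrowCongr σ (Equiv.refl (Fin n))) _ _ fun f => ?_
    have he : (Equiv.arrowCongr σ (Equiv.refl (Fin n))) f = f ∘ σ := by
      funext l
      simp [Equiv.arrowCongr_apply, hσ]
    rw [he, hsym σ f]
    congr 1
    have himg : (univ.erase (k : Fin (m+1))).image σ = univ.erase 0 := by
      rw [Finset.image_erase σ.injective, Finset.image_univ_equiv]
      simp [hσ, Equiv.swap_apply_right]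
    have hp : ∏ l ∈ univ.erase (0 : Fin (m+1)), x ((f ∘ σ) l)
        = ∏ l ∈ univ.erase k, x (f l) := by
      rw [← himg, Finset.prod_image fun a _ b _ hab => σ.injective hab]
      refine Finset.prod_congr rfl fun a _ => ?_
      simp [hσ]
    have hv : (f ∘ σ) 0 = f k := by simp [hσ, Equiv.swap_apply_left]
    rw [hp, hv]
  rw [h1, sum_cons_decomp fun f => A f * ((∏ l ∈ univ.erase 0, x (f l)) * v (f 0))]
  refine Finset.sum_congr rfl fun i _ => ?_
  rw [contrT, Finset.mul_sum]
  refine Finset.sum_congr rfl fun g _ => ?_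
  have hp : (∏ l ∈ univ.erase (0 : Fin (m+1)), x ((Fin.cons i g : Fin (m+1) → Fin n) l)) = ∏ k : Fin m, x (g k) := by
    have h0 := prod_erase_zero (m := m) fun l => x ((Fin.cons i g : Fin (m+1) → Fin n) l)
    simpa using h0
  rw [hp, Fin.cons_zero]
  ring

lemma hasDerivAt_polyT (A : (Fin (m+1) → Fin n) → ℝ)
    (hsym : ∀ (σ : Equiv.Perm (Fin (m+1))) (f : Fin (m+1) → Fin n), A (f ∘ σ) = A f)
    (x v : Fin n → ℝ) :
    HasDerivAt (fun t : ℝ => polyT A (x + t • v))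
      (((m : ℝ) + 1) * ∑ i, v i * contrT A x i) 0 := by
  have h : ∀ f : Fin (m+1) → Fin n,
      HasDerivAt (fun t : ℝ => A f * ∏ k, (x (f k) + t * v (f k)))
        (A f * ∑ k, (∏ l ∈ univ.erase k, (x (f l) + 0 * v (f l))) • v (f k)) 0 := by
    intro f
    refine HasDerivAt.const_mul _ ?_
    exact HasDerivAt.fun_finsetProd fun k _ =>
      (hasDerivAt_mul_const (v (f k))).const_add (x (f k))
  have hsum := HasDerivAt.fun_sum fun f (_ : f ∈ (univ : Finset (Fin (m+1) → Fin n))) => h f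
  have hfun : (fun t : ℝ => ∑ f : Fin (m+1) → Fin n, A f * ∏ k, (x (f k) + t * v (f k)))
      = fun t : ℝ => polyT A (x + t • v) := by
    funext t
    simp [polyT]
  rw [hfun] at hsum
  refine HasDerivAt.congr_deriv hsum ?_
  symm
  simp only [zero_mul, add_zero, smul_eq_mul]
  have h2 : ∀ f : Fin (m+1) → Fin n,
      A f * ∑ k, (∏ l ∈ univ.erase k, x (f l)) * v (f k)
      = ∑ k, A f * ((∏ l ∈ univ.erase k, x (f l)) * v (f k)) := by
    intro f; rw [Finset.mul_sum]
  rw [Finset.sum_congr rfl fun f _ => h2 f, Finset.sum_comm]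
  rw [Finset.sum_congr rfl fun k _ => sum_deriv_term A hsym x v k]
  rw [Finset.sum_const, Finset.card_univ, Fintype.card_fin, nsmul_eq_mul]
  push_cast
  ring

lemma hasDerivAt_phi (x v : Fin n → ℝ) (m : ℕ) :
    HasDerivAt (fun t : ℝ => ∑ j, (x j + t * v j) ^ (m+1))
      (((m : ℝ) + 1) * ∑ j, v j * x j ^ m) 0 := by
  have h : ∀ j : Fin n, HasDerivAt (fun t : ℝ => (x j + t * v j) ^ (m+1))
      ((((m+1 : ℕ) : ℝ) * (x j + 0 * v j) ^ (m+1-1)) * (v j)) 0 := by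
    intro j
    exact ((hasDerivAt_mul_const (v j)).const_add (x j)).pow (m+1)
  have hsum := HasDerivAt.fun_sum fun j (_ : j ∈ (univ : Finset (Fin n))) => h j
  refine HasDerivAt.congr_deriv hsum ?_
  symm
  rw [Finset.mul_sum]
  refine Finset.sum_congr rfl fun j _ => ?_
  push_cast
  ring

lemma continuous_polyT {M : ℕ} (A : (Fin M → Fin n) → ℝ) : Continuous (polyT A) := by
  unfold polyT
  exact continuous_finset_sum _ fun f _ =>
    continuous_const.mul (continuous_finset_prod _ fun k _ => continuous_apply _)

end aux

theorem stmt8 (m n : ℕ) (hm : Even (m + 1))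
    (A : (Fin (m+1) → Fin n) → ℝ)
    (hsym : ∀ (σ : Equiv.Perm (Fin (m+1))) (f : Fin (m+1) → Fin n), A (f ∘ σ) = A f) :
    IsPTensor A ↔ ∀ x : Fin n → ℝ, x ≠ 0 → 0 < polyT A x := by
  constructor
  · intro hP
    rcases Nat.eq_zero_or_pos n with hn | hn
    · intro x hx
      exact absurd (funext fun i => absurd i.2 (by omega)) hx
    · set φ : (Fin n → ℝ) → ℝ := fun y => ∑ j, y j ^ (m+1) with hφ
      have hφcont : Continuous φ :=
        continuous_finset_sum _ fun j _ => (continuous_apply j).pow _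
      have hφpos : ∀ y : Fin n → ℝ, y ≠ 0 → 0 < φ y := by
        intro y hy
        obtain ⟨j, hj⟩ := Function.ne_iff.1 hy
        exact Finset.sum_pos' (fun l _ => hm.pow_nonneg _)
          ⟨j, Finset.mem_univ j, hm.pow_pos hj⟩
      have hφsmul : ∀ (c : ℝ) (y : Fin n → ℝ), φ (c • y) = c ^ (m+1) * φ y := by
        intro c y
        simp only [hφ, Pi.smul_apply, smul_eq_mul, mul_pow, Finset.mul_sum]
      set S : Set (Fin n → ℝ) := {y | φ y = 1} with hS
      have hSne : S.Nonempty := by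
        have h1 : ∑ j : Fin n, (Pi.single (⟨0, hn⟩ : Fin n) (1:ℝ) : Fin n → ℝ) j ^ (m+1) = 1 := by
          rw [Finset.sum_eq_single (⟨0, hn⟩ : Fin n)]
          · simp
          · intro b _ hb
            rw [Pi.single_eq_of_ne hb, zero_pow (by omega : m+1 ≠ 0)]
          · simp
        exact ⟨Pi.single (⟨0, hn⟩ : Fin n) (1:ℝ), h1⟩
      have hScl : IsClosed S := isClosed_eq hφcont continuous_const
      have hSbd : Bornology.IsBounded S := by
        refine (Metric.isBounded_closedBall (x := (0 : Fin n → ℝ)) (r := 1)).subset ?_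
        intro y hy
        rw [Metric.mem_closedBall, dist_zero_right]
        refine (pi_norm_le_iff_of_nonneg zero_le_one).2 fun i => ?_
        have h1 : y i ^ (m+1) ≤ 1 := by
          have h3 : ∑ j, y j ^ (m+1) = 1 := hy
          calc y i ^ (m+1) ≤ ∑ j, y j ^ (m+1) :=
                Finset.single_le_sum (f := fun j => y j ^ (m+1))
                  (fun l _ => hm.pow_nonneg _) (Finset.mem_univ i)
            _ = 1 := h3
        have h4 : |y i| ^ (m+1) ≤ 1 := by
          rw [← abs_pow, abs_of_nonneg (hm.pow_nonneg (y i))]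
          exact h1
        exact (pow_le_one_iff_of_nonneg (abs_nonneg _) (by omega)).1 h4
      have hScomp : IsCompact S := Metric.isCompact_of_isClosed_isBounded hScl hSbd
      obtain ⟨x₀, hx₀S, hmin⟩ := hScomp.exists_isMinOn hSne (continuous_polyT A).continuousOn
      have hφx₀ : φ x₀ = 1 := hx₀S
      have hx₀ne : x₀ ≠ 0 := by
        rintro rfl
        rw [hφ] at hφx₀
        simp [zero_pow (by omega : m+1 ≠ 0)] at hφx₀
      set μ : ℝ := polyT A x₀ with hμ
      have key : ∀ y : Fin n → ℝ, y ≠ 0 → μ * φ y ≤ polyT A y := by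
        intro y hy
        have hs : 0 < φ y := hφpos y hy
        set c : ℝ := (φ y) ^ ((m+1 : ℝ)⁻¹) with hc
        have hcpos : 0 < c := Real.rpow_pos_of_pos hs _
        have hcpow : c ^ (m+1) = φ y := by
          rw [hc]
          exact_mod_cast Real.rpow_inv_natCast_pow hs.le (by omega : m+1 ≠ 0)
        have hz : φ (c⁻¹ • y) = 1 := by
          rw [hφsmul, inv_pow, hcpow]
          field_simp
        have h2 : μ ≤ polyT A (c⁻¹ • y) := hmin (show (c⁻¹ • y) ∈ S from hz)
        have h3 : polyT A y = c ^ (m+1) * polyT A (c⁻¹ • y) := by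
          conv_lhs => rw [show y = c • (c⁻¹ • y) by rw [smul_smul]; field_simp; rw [one_smul]]
          rw [polyT_smul]
        rw [h3, ← hcpow]
        have hcp : (0:ℝ) < c ^ (m+1) := pow_pos hcpos _
        nlinarith
      have eigen : ∀ i : Fin n, contrT A x₀ i = μ * x₀ i ^ m := by
        intro i
        set e : Fin n → ℝ := Pi.single i 1 with he
        have hsingle : ∀ c : Fin n → ℝ, ∑ j, e j * c j = c i := by
          intro c
          rw [Finset.sum_eq_single i]
          · simp [he]
          · intro b _ hb
            simp [he, Pi.single_eq_of_ne hb]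
          · simp
        have hg : HasDerivAt (fun t : ℝ => polyT A (x₀ + t • e))
            (((m:ℝ)+1) * contrT A x₀ i) 0 := by
          have h := hasDerivAt_polyT A hsym x₀ e
          rwa [hsingle] at h
        have hψ : HasDerivAt (fun t : ℝ => φ (x₀ + t • e)) (((m:ℝ)+1) * x₀ i ^ m) 0 := by
          have h := hasDerivAt_phi x₀ e m
          rw [hsingle] at h
          have hfun : (fun t : ℝ => ∑ j, (x₀ j + t * e j) ^ (m+1))
              = fun t : ℝ => φ (x₀ + t • e) := by
            funext t
            rw [hφ]
            simp
          rwa [hfun] at h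
        have hψ0 : φ (x₀ + (0:ℝ) • e) = 1 := by simpa using hφx₀
        have hFd := hg.fun_div hψ
          (by show φ (x₀ + (0:ℝ) • e) ≠ 0; rw [hψ0]; exact one_ne_zero)
        have hlocal : IsLocalMin (fun t : ℝ => polyT A (x₀ + t • e) / φ (x₀ + t • e)) 0 := by
          have hcont : Continuous fun t : ℝ => x₀ + t • e := by continuity
          have hmem : {y : Fin n → ℝ | y ≠ 0} ∈ nhds (x₀ + (0:ℝ) • e) := by
            refine isOpen_ne.mem_nhds ?_
            simpa using hx₀ne
          have hev : ∀ᶠ t : ℝ in nhds 0, x₀ + t • e ≠ 0 :=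
            hcont.continuousAt.preimage_mem_nhds hmem
          refine hev.mono fun t ht => ?_
          have h1 := key (x₀ + t • e) ht
          have h2 : 0 < φ (x₀ + t • e) := hφpos _ ht
          show polyT A (x₀ + (0:ℝ) • e) / φ (x₀ + (0:ℝ) • e) ≤ _
          rw [hψ0, show polyT A (x₀ + (0:ℝ) • e) = μ by simp [hμ]]
          rw [div_one]
          exact (le_div_iff₀ h2).2 h1
        have hder := hFd.deriv
        rw [hlocal.deriv_eq_zero] at hder
        rw [show polyT A (x₀ + (0:ℝ) • e) = μ by simp [hμ], hψ0] at hder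
        have hc : ((m:ℝ)+1) * contrT A x₀ i = ((m:ℝ)+1) * (μ * x₀ i ^ m) := by
          field_simp at hder
          linarith
        exact mul_left_cancel₀ (by positivity) hc
      obtain ⟨i, hi⟩ := hP x₀ hx₀ne
      rw [eigen i] at hi
      have hxp : (0:ℝ) ≤ x₀ i ^ (m+1) := hm.pow_nonneg _
      have hμpos : 0 < μ := by
        by_contra hμn
        push_neg at hμn
        have h5 : x₀ i * (μ * x₀ i ^ m) = μ * x₀ i ^ (m+1) := by
          rw [pow_succ]; ring
        rw [h5] at hi
        nlinarith
      intro x hx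
      have h6 := key x hx
      have h7 := hφpos x hx
      nlinarith
  · intro hpos x hx
    have h := hpos x hx
    rw [polyT_eq_sum] at h
    by_contra hc
    push_neg at hc
    exact absurd h (not_lt.2 (Finset.sum_nonpos fun i _ => hc i))
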